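/- On a flat complex torus, for each w ∈ Γ* with eigenvalue λ = 4π²|w|², the pair of eigenfunctions φ_w, ψ_w satisfies L(φ_w) + L(ψ_w) = 0, where L(f) = λ² f² − 2λ|∇f|² + |dd^c f|² for f in the λ-eigenspace. Hence the flat metric on any flat complex torus is λ_1-extremal within its Kähler class. -/

import Mathlib

open Real Complex

/-- The Wirtinger derivative `∂f/∂z^α` of `f : ℂⁿ → ℂ`. -/
noncomputable def wirtD {n : ℕ} (α : Fin n) (f : EuclideanSpace ℂ (Fin n) → ℂ)
    (z : EuclideanSpace ℂ (Fin n)) : ℂ :=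
  (1 / 2) * (fderiv ℝ f z (EuclideanSpace.single α 1)
    - Complex.I * fderiv ℝ f z (Complex.I • EuclideanSpace.single α 1))

/-- The conjugate Wirtinger derivative `∂f/∂z̄^α`. -/
noncomputable def wirtDbar {n : ℕ} (α : Fin n) (f : EuclideanSpace ℂ (Fin n) → ℂ)
    (z : EuclideanSpace ℂ (Fin n)) : ℂ :=
  (1 / 2) * (fderiv ℝ f z (EuclideanSpace.single α 1)
    + Complex.I * fderiv ℝ f z (Complex.I • EuclideanSpace.single α 1))

/-- The coefficient of `dz^α ∧ dz̄^β` in `dd^c f = 2i ∂∂̄ f`. -/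
noncomputable def ddcCoeff {n : ℕ} (α β : Fin n) (f : EuclideanSpace ℂ (Fin n) → ℂ)
    (z : EuclideanSpace ℂ (Fin n)) : ℂ :=
  2 * Complex.I * wirtD α (fun x => wirtDbar β f x) z

/-- `|∇f|²` for a real function on `ℂⁿ` (flat metric), computed in the real
orthonormal directions `e_α, i e_α`. -/
noncomputable def gradNormSq {n : ℕ} (f : EuclideanSpace ℂ (Fin n) → ℝ)
    (z : EuclideanSpace ℂ (Fin n)) : ℝ :=
  ∑ α, ((fderiv ℝ f z (EuclideanSpace.single α 1)) ^ 2
    + (fderiv ℝ f z (Complex.I • EuclideanSpace.single α 1)) ^ 2)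

/-- The pointwise expression of `L(f) = δ^cδ(f dd^c f)` for a `λ`-eigenfunction `f` on
a flat complex torus: `L(f) = λ² f² - 2λ|∇f|² + |dd^c f|²`
(with `|η|² = 4Σ_{α,β}|η_{αβ̄}|²` for the flat metric). -/
noncomputable def Lfun {n : ℕ} (lam : ℝ) (f : EuclideanSpace ℂ (Fin n) → ℝ)
    (z : EuclideanSpace ℂ (Fin n)) : ℝ :=
  lam ^ 2 * (f z) ^ 2 - 2 * lam * gradNormSq f z
    + 4 * ∑ α, ∑ β, Complex.normSq (ddcCoeff α β (fun x => ((f x : ℝ) : ℂ)) z)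

/-- The eigenfunction `φ_w = √(2/Vol)·cos(2π Σ x^k u^k)` on a flat complex torus. -/
noncomputable def phiW {n : ℕ} (Vol : ℝ) (w z : EuclideanSpace ℂ (Fin n)) : ℝ :=
  Real.sqrt (2 / Vol) * Real.cos (2 * π * Complex.re (inner ℂ z w : ℂ))

/-- The eigenfunction `ψ_w = √(2/Vol)·sin(2π Σ x^k u^k)` on a flat complex torus. -/
noncomputable def psiW {n : ℕ} (Vol : ℝ) (w z : EuclideanSpace ℂ (Fin n)) : ℝ :=
  Real.sqrt (2 / Vol) * Real.sin (2 * π * Complex.re (inner ℂ z w : ℂ))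


/-! ### Auxiliary machinery -/

noncomputable def Lmap {n : ℕ} (w : EuclideanSpace ℂ (Fin n)) :
    EuclideanSpace ℂ (Fin n) →L[ℝ] ℝ :=
  (2 * π) • (Complex.reCLM.comp ((innerSL ℂ w).restrictScalars ℝ))

lemma Lmap_apply {n : ℕ} (w v : EuclideanSpace ℂ (Fin n)) :
    Lmap w v = 2 * π * (inner ℂ w v : ℂ).re := by
  simp [Lmap]

lemma Lmap_re {n : ℕ} (w z : EuclideanSpace ℂ (Fin n)) :
    2 * π * Complex.re (inner ℂ z w : ℂ) = Lmap w z := by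
  rw [Lmap_apply, ← inner_conj_symm z w, Complex.conj_re]

lemma Lmap_single {n : ℕ} (w : EuclideanSpace ℂ (Fin n)) (β : Fin n) :
    Lmap w (EuclideanSpace.single β 1) = 2 * π * (w β).re := by
  simp [Lmap_apply, EuclideanSpace.inner_single_right]

lemma Lmap_Ismul {n : ℕ} (w : EuclideanSpace ℂ (Fin n)) (β : Fin n) :
    Lmap w (Complex.I • EuclideanSpace.single β 1) = 2 * π * (w β).im := by
  simp [Lmap_apply, inner_smul_right, EuclideanSpace.inner_single_right, Complex.mul_re]

lemma hasFDeriv_cg {n : ℕ} (c : ℝ) (L : EuclideanSpace ℂ (Fin n) →L[ℝ] ℝ) (g g1 : ℝ → ℝ)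
    (hg : ∀ t, HasDerivAt g (g1 t) t) (z : EuclideanSpace ℂ (Fin n)) :
    HasFDerivAt (fun x => c * g (L x)) ((c * g1 (L z)) • L) z := by
  have h := ((hg (L z)).comp_hasFDerivAt z L.hasFDerivAt).const_mul c
  simpa [smul_smul, Function.comp] using h

lemma hasFDeriv_cgC {n : ℕ} (c : ℝ) (L : EuclideanSpace ℂ (Fin n) →L[ℝ] ℝ) (g g1 : ℝ → ℝ)
    (hg : ∀ t, HasDerivAt g (g1 t) t) (z : EuclideanSpace ℂ (Fin n)) :
    HasFDerivAt (fun x => ((c * g (L x) : ℝ) : ℂ))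
      ((c * g1 (L z)) • Complex.ofRealCLM.comp L) z := by
  have h := Complex.ofRealCLM.hasFDerivAt.comp z (hasFDeriv_cg c L g g1 hg z)
  have e : Complex.ofRealCLM.comp ((c * g1 (L z)) • L)
      = (c * g1 (L z)) • Complex.ofRealCLM.comp L := by
    ext v; simp
  rw [e] at h
  exact h

lemma wirtDbar_cg {n : ℕ} (c : ℝ) (L : EuclideanSpace ℂ (Fin n) →L[ℝ] ℝ) (g g1 : ℝ → ℝ)
    (hg : ∀ t, HasDerivAt g (g1 t) t) (β : Fin n) :
    (fun x => wirtDbar β (fun y => ((c * g (L y) : ℝ) : ℂ)) x)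
      = fun x => ((c * g1 (L x) : ℝ) : ℂ) *
          ((1 / 2) * (((L (EuclideanSpace.single β 1) : ℝ) : ℂ)
            + Complex.I * ((L (Complex.I • EuclideanSpace.single β 1) : ℝ) : ℂ))) := by
  funext x
  rw [wirtDbar, (hasFDeriv_cgC c L g g1 hg x).fderiv]
  simp only [ContinuousLinearMap.smul_apply, ContinuousLinearMap.comp_apply,
    Complex.ofRealCLM_apply, real_smul, Complex.ofReal_mul]
  ring

lemma normSq_ddc_cg {n : ℕ} (c : ℝ) (L : EuclideanSpace ℂ (Fin n) →L[ℝ] ℝ) (g g1 : ℝ → ℝ)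
    (hg : ∀ t, HasDerivAt g (g1 t) t) (hg1 : ∀ t, HasDerivAt g1 (-(g t)) t)
    (α β : Fin n) (z : EuclideanSpace ℂ (Fin n)) :
    Complex.normSq (ddcCoeff α β (fun y => ((c * g (L y) : ℝ) : ℂ)) z)
      = (c * g (L z)) ^ 2
        * ((L (EuclideanSpace.single α 1)) ^ 2 + (L (Complex.I • EuclideanSpace.single α 1)) ^ 2)
        * ((L (EuclideanSpace.single β 1)) ^ 2 + (L (Complex.I • EuclideanSpace.single β 1)) ^ 2)
        / 4 := by
  set pa := L (EuclideanSpace.single α 1)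
  set qa := L (Complex.I • EuclideanSpace.single α 1)
  set pb := L (EuclideanSpace.single β 1)
  set qb := L (Complex.I • EuclideanSpace.single β 1)
  set K : ℂ := (1 / 2) * ((pb : ℂ) + Complex.I * (qb : ℂ)) with hK
  have h2 : HasFDerivAt (fun x => ((c * g1 (L x) : ℝ) : ℂ) * K)
      (K • ((c * -(g (L z))) • Complex.ofRealCLM.comp L)) z :=
    (hasFDeriv_cgC c L g1 (fun t => -(g t)) hg1 z).mul_const K
  have hd : ddcCoeff α β (fun y => ((c * g (L y) : ℝ) : ℂ)) z
      = (Complex.I * ((-(c * g (L z)) : ℝ) : ℂ))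
        * (((pa : ℂ) - Complex.I * (qa : ℂ)) * K) := by
    rw [ddcCoeff, wirtDbar_cg c L g g1 hg β, wirtD, h2.fderiv]
    simp only [ContinuousLinearMap.smul_apply, ContinuousLinearMap.comp_apply,
      Complex.ofRealCLM_apply, real_smul, smul_eq_mul, Complex.ofReal_mul,
      Complex.ofReal_neg]
    ring
  rw [hd]
  have h1 : Complex.normSq ((pa : ℂ) - Complex.I * (qa : ℂ)) = pa ^ 2 + qa ^ 2 := by
    simp [Complex.normSq_apply]; ring
  have h3 : Complex.normSq K = (pb ^ 2 + qb ^ 2) / 4 := by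
    rw [hK]; simp [Complex.normSq_apply]; ring
  rw [map_mul, map_mul, map_mul, h1, h3, Complex.normSq_I, Complex.normSq_ofReal]
  ring

lemma gradNormSq_cg {n : ℕ} (c : ℝ) (L : EuclideanSpace ℂ (Fin n) →L[ℝ] ℝ) (g g1 : ℝ → ℝ)
    (hg : ∀ t, HasDerivAt g (g1 t) t) (z : EuclideanSpace ℂ (Fin n)) :
    gradNormSq (fun x => c * g (L x)) z
    = (c * g1 (L z)) ^ 2 * ∑ α, ((L (EuclideanSpace.single α 1)) ^ 2
        + (L (Complex.I • EuclideanSpace.single α 1)) ^ 2) := by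
  rw [gradNormSq, (hasFDeriv_cg c L g g1 hg z).fderiv, Finset.mul_sum]
  refine Finset.sum_congr rfl fun α _ => ?_
  simp only [ContinuousLinearMap.smul_apply, smul_eq_mul]
  ring

lemma norm_sq_eq_sum_normSq {n : ℕ} (w : EuclideanSpace ℂ (Fin n)) :
    ‖w‖ ^ 2 = ∑ α, Complex.normSq (w α) := by
  rw [EuclideanSpace.norm_eq, Real.sq_sqrt (by positivity)]
  exact Finset.sum_congr rfl fun i _ => by
    rw [Complex.sq_norm]

lemma Lfun_pair_zero {n : ℕ} (lam c : ℝ) (w : EuclideanSpace ℂ (Fin n))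
    (hlam : lam = 4 * π ^ 2 * ‖w‖ ^ 2) (z : EuclideanSpace ℂ (Fin n)) :
    Lfun lam (fun x => c * Real.cos (Lmap w x)) z
      + Lfun lam (fun x => c * Real.sin (Lmap w x)) z = 0 := by
  have hcos : ∀ t, HasDerivAt Real.cos ((fun t => -Real.sin t) t) t :=
    fun t => Real.hasDerivAt_cos t
  have hsin : ∀ t, HasDerivAt Real.sin (Real.cos t) t := fun t => Real.hasDerivAt_sin t
  have hsin' : ∀ t, HasDerivAt (fun t => -Real.sin t) (-(Real.cos t)) t :=
    fun t => (Real.hasDerivAt_sin t).neg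
  have hcos' : ∀ t, HasDerivAt Real.cos (-(Real.sin t)) t := fun t => Real.hasDerivAt_cos t
  set L := Lmap w with hL
  set A : Fin n → ℝ := fun α => (L (EuclideanSpace.single α 1)) ^ 2
      + (L (Complex.I • EuclideanSpace.single α 1)) ^ 2 with hA
  have hAsum : ∑ α, A α = lam := by
    rw [hlam, norm_sq_eq_sum_normSq, Finset.mul_sum]
    refine Finset.sum_congr rfl fun α _ => ?_
    rw [hA]
    simp only [hL, Lmap_single, Lmap_Ismul, Complex.normSq_apply]
    ring
  have hss : ∀ X : ℝ, (∑ α, ∑ β, (X * A α * A β / 4)) = X * lam * lam / 4 := by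
    intro X
    have h1 : ∀ α, (∑ β, X * A α * A β / 4) = X * lam * A α / 4 := fun α => by
      rw [← Finset.sum_div, ← Finset.mul_sum, hAsum]; ring
    rw [Finset.sum_congr rfl fun α _ => h1 α, ← Finset.sum_div, ← Finset.mul_sum, hAsum]
  have hg1 := gradNormSq_cg c L Real.cos (fun t => -Real.sin t) hcos z
  have hg2 := gradNormSq_cg c L Real.sin Real.cos hsin z
  have hd1 : (∑ α, ∑ β, Complex.normSq
        (ddcCoeff α β (fun x => ((c * Real.cos (L x) : ℝ) : ℂ)) z))
      = (c * Real.cos (L z)) ^ 2 * lam * lam / 4 := by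
    rw [Finset.sum_congr rfl fun α _ => Finset.sum_congr rfl fun β _ =>
      normSq_ddc_cg c L Real.cos (fun t => -Real.sin t) hcos hsin' α β z]
    exact hss _
  have hd2 : (∑ α, ∑ β, Complex.normSq
        (ddcCoeff α β (fun x => ((c * Real.sin (L x) : ℝ) : ℂ)) z))
      = (c * Real.sin (L z)) ^ 2 * lam * lam / 4 := by
    rw [Finset.sum_congr rfl fun α _ => Finset.sum_congr rfl fun β _ =>
      normSq_ddc_cg c L Real.sin Real.cos hsin hcos' α β z]
    exact hss _
  have hAsum' : ∑ α, ((L (EuclideanSpace.single α 1)) ^ 2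
      + (L (Complex.I • EuclideanSpace.single α 1)) ^ 2) = lam := hAsum
  simp only [Lfun, hg1, hg2, hd1, hd2, hAsum, hAsum']
  ring

/-- On a flat complex torus `ℂⁿ/Γ` of volume `Vol`, for each `w ∈ Γ*`
with eigenvalue `λ = 4π²|w|²` the pair of eigenfunctions `φ_w, ψ_w` satisfies
`L(φ_w) + L(ψ_w) = 0`, where `L(f) = λ²f² - 2λ|∇f|² + |dd^c f|²`.  Hence, by the
theorem of Apostolov–Jakobson–Kokarev (hypothesis `hAJK`: if some finite collection of
first eigenfunctions satisfies `Σ_j L(f_j) = 0`, then the metric is λ₁-extremal within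
its Kähler class), the flat metric on any flat complex torus is λ₁-extremal within its
Kähler class. -/
theorem stmt_14 (n : ℕ) (hn : 0 < n) (Vol : ℝ) (hVol : 0 < Vol)
    (dualΓ : Set (EuclideanSpace ℂ (Fin n)))
    (lam1 : ℝ) (hlam1 : 0 < lam1)
    (hattain : ∃ w ∈ dualΓ, lam1 = 4 * π ^ 2 * ‖w‖ ^ 2)
    (IsFirstEigen : (EuclideanSpace ℂ (Fin n) → ℝ) → Prop)
    (hfe : ∀ w ∈ dualΓ, lam1 = 4 * π ^ 2 * ‖w‖ ^ 2 →
      IsFirstEigen (phiW Vol w) ∧ IsFirstEigen (psiW Vol w))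
    (ExtremalWithinKaehlerClass : Prop)
    (hAJK : (∃ (N : ℕ) (F : Fin N → EuclideanSpace ℂ (Fin n) → ℝ),
        (∀ j, IsFirstEigen (F j)) ∧ ∀ z, (∑ j, Lfun lam1 (F j) z) = 0) →
      ExtremalWithinKaehlerClass) :
    (∀ (w : EuclideanSpace ℂ (Fin n)), lam1 = 4 * π ^ 2 * ‖w‖ ^ 2 →
      ∀ z, Lfun lam1 (phiW Vol w) z + Lfun lam1 (psiW Vol w) z = 0) ∧
    ExtremalWithinKaehlerClass := by
  have hphi : ∀ w : EuclideanSpace ℂ (Fin n),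
      phiW Vol w = fun z => Real.sqrt (2 / Vol) * Real.cos (Lmap w z) :=
    fun w => funext fun z => by rw [phiW, Lmap_re]
  have hpsi : ∀ w : EuclideanSpace ℂ (Fin n),
      psiW Vol w = fun z => Real.sqrt (2 / Vol) * Real.sin (Lmap w z) :=
    fun w => funext fun z => by rw [psiW, Lmap_re]
  have main : ∀ (w : EuclideanSpace ℂ (Fin n)), lam1 = 4 * π ^ 2 * ‖w‖ ^ 2 →
      ∀ z, Lfun lam1 (phiW Vol w) z + Lfun lam1 (psiW Vol w) z = 0 := by
    intro w hw z
    rw [hphi w, hpsi w]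
    exact Lfun_pair_zero lam1 (Real.sqrt (2 / Vol)) w hw z
  refine ⟨main, hAJK ?_⟩
  obtain ⟨w, hwmem, hw⟩ := hattain
  refine ⟨2, ![phiW Vol w, psiW Vol w], ?_, ?_⟩
  · intro j
    fin_cases j
    · exact (hfe w hwmem hw).1
    · exact (hfe w hwmem hw).2
  · intro z
    rw [Fin.sum_univ_two]
    simpa using main w hw z
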